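/- A filtered colimit (directed union) of coherent rings along flat ring maps, such that every finitely generated ideal of the colimit is extended from some stage, is coherent. In particular, if (B_i) is a directed system of Noetherian rings with injective flat transition maps and B = colim B_i such that every finite subset of B lies in the image of some B_i and each B_i → B is flat, then B is coherent. -/

import Mathlib

open TensorProduct in
/-- A directed union of Noetherian rings with injective transition maps, such that every
element of the colimit comes from some stage and each canonical map to the colimit is flat,
is a coherent ring: every finitely generated ideal is finitely presented. -/
theorem coherent_of_directed_colimit_of_noetherian
    (ι : Type*) [Preorder ι] [IsDirected ι (· ≤ ·)] [Nonempty ι]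
    (Bsys : ι → Type*) [∀ i, CommRing (Bsys i)] [∀ i, IsNoetherianRing (Bsys i)]
    (f : ∀ i j, i ≤ j → Bsys i →+* Bsys j)
    (hinj : ∀ i j (h : i ≤ j), Function.Injective (f i j h))
    (B : Type*) [CommRing B]
    (g : ∀ i, Bsys i →+* B)
    (hcomp : ∀ i j (h : i ≤ j), (g j).comp (f i j h) = g i)
    (hexh : ∀ b : B, ∃ i, b ∈ Set.range (g i))
    (hflat : ∀ i, (g i).Flat) :
    ∀ I : Ideal B, I.FG → Module.FinitePresentation B I := by
  classical
  intro I hI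
  obtain ⟨s, hs⟩ := hI
  -- choose for each generator a stage it comes from
  choose idx pre hpre using fun b : B => hexh b
  -- a common upper bound for the stages of the generators
  obtain ⟨i, hi⟩ := (s.image idx).exists_le
  -- every generator is in the range of `g i`
  have hrange : (s : Set B) ⊆ Set.range (g i) := by
    intro b hb
    have hle : idx b ≤ i := hi _ (Finset.mem_image_of_mem idx hb)
    refine ⟨f (idx b) i hle (pre b), ?_⟩
    have := congrArg (· (pre b)) (hcomp (idx b) i hle)
    simpa [hpre b] using this
  set A := Bsys i
  letI : Algebra A B := (g i).toAlgebra
  haveI : Module.Flat A B := hflat i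
  have halg : algebraMap A B = g i := rfl
  -- the ideal of A generated by the preimages of the generators
  set J : Ideal A := Ideal.span ((g i) ⁻¹' (s : Set B)) with hJ
  have hmap : J.map (g i) = I := by
    rw [hJ, Ideal.map_span, Set.image_preimage_eq_iff.mpr hrange, hs]
  -- J is finitely presented over the Noetherian ring A
  haveI : Module.Finite A J := (Module.Finite.iff_fg).mpr (IsNoetherian.noetherian J)
  haveI : Module.FinitePresentation A J := Module.finitePresentation_of_finite A J
  -- the natural map B ⊗[A] J → B
  let e : B ⊗[A] A ≃ₗ[B] B := TensorProduct.AlgebraTensorModule.rid A B B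
  let φ : B ⊗[A] J →ₗ[B] B := e.toLinearMap ∘ₗ (J.subtype.baseChange B)
  have hφtmul : ∀ (b : B) (x : J), φ (b ⊗ₜ x) = g i (x : A) * b := by
    intro b x
    show e (b ⊗ₜ (x : A)) = g i (x : A) * b
    rw [TensorProduct.AlgebraTensorModule.rid_tmul, Algebra.smul_def, halg]
  have hφinj : Function.Injective φ := by
    refine e.injective.comp ?_
    rw [show (⇑(J.subtype.baseChange B)) = ⇑(J.subtype.lTensor B) from
      LinearMap.baseChange_eq_ltensor _]
    exact Module.Flat.lTensor_preserves_injective_linearMap J.subtype J.injective_subtype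
  have hφrange : LinearMap.range φ = (I : Submodule B B) := by
    apply le_antisymm
    · rintro _ ⟨x, rfl⟩
      induction x with
      | zero => simp
      | tmul b a =>
        rw [hφtmul]
        exact I.mul_mem_right b (hmap ▸ Ideal.mem_map_of_mem (g i) a.2)
      | add x y hx hy => rw [map_add]; exact I.add_mem hx hy
    · rw [← hs, Ideal.span_le]
      intro b hb
      obtain ⟨a, ha⟩ := hrange hb
      have haJ : a ∈ J := Ideal.subset_span (by simp [Set.mem_preimage, ha, hb])
      exact ⟨1 ⊗ₜ ⟨a, haJ⟩, by rw [hφtmul]; simp [ha]⟩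
  -- transfer finite presentation along the isomorphism B ⊗[A] J ≃ I
  let eIso : (B ⊗[A] J) ≃ₗ[B] I :=
    (LinearEquiv.ofInjective φ hφinj).trans (LinearEquiv.ofEq _ _ hφrange)
  exact Module.finitePresentation_of_surjective eIso.toLinearMap eIso.surjective
    (by rw [LinearEquiv.ker]; exact Submodule.fg_bot)
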